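/- arXiv:2012.09871 — 2 statements merged into one kernel-verified Lean document; each statement's English description precedes it below -/
import Mathlib

section
/- Let X be a metric space and let γ, γ̄ : ℝ → X be isometric embeddings (lines) such that the Hausdorff distance between their images is at most C and d(γ(0), γ̄(0)) ≤ C. Then for every t ∈ ℝ, min{ d(γ(t), γ̄(t)), d(γ(t), γ̄(−t)) } ≤ 3C; consequently, after possibly replacing γ̄ by the reversed line t ↦ γ̄(−t), one has d(γ(t), γ̄(t)) ≤ 3C for all t ∈ ℝ. -/
open Set Filter MeasureTheory Metric
open scoped ENNReal NNReal Topology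

/-- A (geodesic) line in a metric space: a map `γ : ℝ → X` with
`d(γ s, γ t) = |s - t|` for all `s, t`, i.e. an isometric embedding of `ℝ`
(in a Riemannian manifold such a curve is automatically a geodesic that
minimizes the distance between any two of its points). -/
def IsLine {X : Type} [MetricSpace X] (γ : ℝ → X) : Prop :=
  ∀ s t : ℝ, dist (γ s) (γ t) = |s - t|

/-- A (geodesic) ray: a map `γ : ℝ → X` with `d(γ s, γ t) = |s - t|`
for all `s, t ≥ 0`, i.e. an isometric embedding of `[0, ∞)`. -/
def IsRay {X : Type} [MetricSpace X] (γ : ℝ → X) : Prop :=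
  ∀ s t : ℝ, 0 ≤ s → 0 ≤ t → dist (γ s) (γ t) = |s - t|

/-- A minimizing (unit-speed) geodesic segment defined on `[a, b]`. -/
def IsMinimizingSegment {X : Type} [MetricSpace X] (σ : ℝ → X) (a b : ℝ) : Prop :=
  ∀ s ∈ Set.Icc a b, ∀ t ∈ Set.Icc a b, dist (σ s) (σ t) = |s - t|

/-- Two rays are asymptotes if they stay within bounded distance of each other. -/
def Asymptotic {X : Type} [MetricSpace X] (γ σ : ℝ → X) : Prop :=
  ∃ C : ℝ, 0 < C ∧ ∀ t : ℝ, 0 ≤ t → dist (γ t) (σ t) ≤ C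

/-- A set is geodesically convex if every minimizing geodesic segment
between two of its points is contained in it. -/
def GeodesicallyConvex {X : Type} [MetricSpace X] (A : Set X) : Prop :=
  ∀ (σ : ℝ → X) (a b : ℝ), a ≤ b → IsMinimizingSegment σ a b →
    σ a ∈ A → σ b ∈ A → ∀ t ∈ Set.Icc a b, σ t ∈ A

/-- Extract an almost-optimal witness from the Hausdorff distance bound. -/
lemma exists_witness_of_hausdorff {X : Type} [MetricSpace X] {γ γ' : ℝ → X} {C : ℝ}
    (hC : 0 ≤ C)
    (hH : EMetric.hausdorffEdist (Set.range γ) (Set.range γ') ≤ ENNReal.ofReal C) :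
    ∀ (s ε : ℝ), 0 < ε → ∃ w : ℝ, dist (γ s) (γ' w) ≤ C + ε := by
  intro s ε hε
  have h1 : EMetric.infEdist (γ s) (Set.range γ') ≤ ENNReal.ofReal C :=
    le_trans (EMetric.infEdist_le_hausdorffEdist_of_mem (Set.mem_range_self s)) hH
  have h2 : EMetric.infEdist (γ s) (Set.range γ') < ENNReal.ofReal (C + ε) := by
    refine lt_of_le_of_lt h1 ?_
    rw [ENNReal.ofReal_lt_ofReal_iff (by linarith)]
    linarith
  replace h2 := Metric.infEDist_lt_iff.mp h2
  obtain ⟨y, hy, hlt⟩ := h2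
  obtain ⟨w, rfl⟩ := hy
  exact ⟨w, le_of_lt (edist_lt_ofReal.mp hlt)⟩

/-- The key forcing lemma: if two lines are witness-close (one-sided Hausdorff),
calibrated at `0`, are `3C + m`-far at a positive parameter `a`, and there is a
"positively aligned" witness at a far parameter `p`, we get a contradiction. -/
lemma master_forcing {X : Type} [MetricSpace X] (γ δ : ℝ → X) (C m a p : ℝ)
    (hγ : IsLine γ) (hδ : IsLine δ)
    (h0 : dist (γ 0) (δ 0) ≤ C)
    (hm : 0 < m) (hm1 : m ≤ 1)
    (hwit : ∀ s : ℝ, ∃ w : ℝ, dist (γ s) (δ w) ≤ C + m / 8)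
    (ha : 3 * C + m ≤ dist (γ a) (δ a)) (hapos : 0 < a)
    (hp : a + 2 * C + 2 ≤ p)
    (hpin : ∃ q : ℝ, p - (2 * C + m / 8) ≤ q ∧ dist (γ p) (δ q) ≤ C + m / 8) :
    False := by
  have hC : 0 ≤ C := le_trans dist_nonneg h0
  set ε : ℝ := m / 8 with hεdef
  have hε : 0 < ε := by positivity
  choose w hw using hwit
  -- a is at least C + m/2
  have haC : C + m / 2 ≤ a := by
    have h4 := dist_triangle4 (γ a) (γ 0) (δ 0) (δ a)
    rw [hγ a 0, hδ 0 a] at h4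
    have e1 : |a - 0| = a := by rw [sub_zero, abs_of_pos hapos]
    have e2 : |0 - a| = a := by rw [zero_sub, abs_neg, abs_of_pos hapos]
    rw [e1, e2] at h4
    linarith
  -- calibration at 0
  have cal : ∀ s : ℝ, |s| ≤ |w s| + (2 * C + ε) ∧ |w s| ≤ |s| + (2 * C + ε) := by
    intro s
    constructor
    · have h4 := dist_triangle4 (γ s) (δ (w s)) (δ 0) (γ 0)
      rw [hγ s 0, hδ (w s) 0, sub_zero, sub_zero] at h4
      have h5 := hw s
      have h6 : dist (δ 0) (γ 0) = dist (γ 0) (δ 0) := dist_comm _ _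
      linarith
    · have h4 := dist_triangle4 (δ (w s)) (γ s) (γ 0) (δ 0)
      rw [hδ (w s) 0, hγ s 0, sub_zero, sub_zero] at h4
      have h5 : dist (δ (w s)) (γ s) = dist (γ s) (δ (w s)) := dist_comm _ _
      have h6 := hw s
      linarith
  -- the diamond bound around (a, a)
  have diam : ∀ s : ℝ, 2 * C + m - ε ≤ |a - s| + |w s - a| := by
    intro s
    have h4 := dist_triangle4 (γ a) (γ s) (δ (w s)) (δ a)
    rw [hγ a s, hδ (w s) a] at h4
    have h5 := hw s
    linarith
  -- coarse quasi-isometry bound between witnesses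
  have qi : ∀ s s' q' : ℝ, dist (γ s') (δ q') ≤ C + ε →
      |w s - q'| ≤ |s - s'| + (2 * C + 2 * ε) := by
    intro s s' q' hq'
    have h4 := dist_triangle4 (δ (w s)) (γ s) (γ s') (δ q')
    rw [hδ (w s) q', hγ s s'] at h4
    have h5 : dist (δ (w s)) (γ s) = dist (γ s) (δ (w s)) := dist_comm _ _
    have h6 := hw s
    linarith
  set N : ℕ := ⌈(2 * C + m / 2) / ε⌉₊ with hN
  have hNge : 2 * C + m / 2 ≤ (N : ℝ) * ε := by
    have h1 : (2 * C + m / 2) / ε ≤ (N : ℝ) := Nat.le_ceil _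
    have h2 : ((2 * C + m / 2) / ε) * ε ≤ (N : ℝ) * ε :=
      mul_le_mul_of_nonneg_right h1 (le_of_lt hε)
    rwa [div_mul_cancel₀ _ (ne_of_gt hε)] at h2
  have hNlt : (N : ℝ) * ε < 2 * C + m / 2 + ε := by
    have h1 : (N : ℝ) < (2 * C + m / 2) / ε + 1 :=
      Nat.ceil_lt_add_one (by positivity)
    have h2 : (N : ℝ) * ε < ((2 * C + m / 2) / ε + 1) * ε :=
      mul_lt_mul_of_pos_right h1 hε
    rwa [add_mul, one_mul, div_mul_cancel₀ _ (ne_of_gt hε)] at h2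
  -- the forcing induction: witnesses stay on the reversed branch
  have key : ∀ k : ℕ, k ≤ N → w (a + (k : ℝ) * ε) ≤ -(a + (k : ℝ) * ε) + 2 * C + ε := by
    intro k
    induction k with
    | zero =>
      intro _
      simp only [Nat.cast_zero, zero_mul, add_zero]
      obtain ⟨cal1, cal2⟩ := cal a
      have hd := diam a
      rw [sub_self, abs_zero, zero_add] at hd
      rw [abs_of_pos hapos] at cal1 cal2
      rcases abs_cases (w a - a) with ⟨h1, _⟩ | ⟨h1, _⟩
      · have h2 : w a ≤ |w a| := le_abs_self _
        linarith
      · rcases abs_cases (w a) with ⟨h2, _⟩ | ⟨h2, _⟩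
        · linarith
        · linarith
    | succ k ih =>
      intro hk1
      have hk : k ≤ N := Nat.le_of_succ_le hk1
      have IH := ih hk
      push_cast
      have hk1ε : ((k : ℝ) + 1) * ε ≤ (N : ℝ) * ε := by
        have : ((k : ℝ) + 1) ≤ (N : ℝ) := by exact_mod_cast hk1
        exact mul_le_mul_of_nonneg_right this (le_of_lt hε)
      have hkpos : (0 : ℝ) ≤ (k : ℝ) := Nat.cast_nonneg k
      have hup := qi (a + ((k : ℝ) + 1) * ε) (a + (k : ℝ) * ε) (w (a + (k : ℝ) * ε))
        (hw (a + (k : ℝ) * ε))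
      have hstep : |(a + ((k : ℝ) + 1) * ε) - (a + (k : ℝ) * ε)| = ε := by
        have e : (a + ((k : ℝ) + 1) * ε) - (a + (k : ℝ) * ε) = ε := by ring
        rw [e, abs_of_pos hε]
      rw [hstep] at hup
      have hupper : w (a + ((k : ℝ) + 1) * ε) ≤ w (a + (k : ℝ) * ε) + (ε + (2 * C + 2 * ε)) := by
        have h5 := le_abs_self (w (a + ((k : ℝ) + 1) * ε) - w (a + (k : ℝ) * ε))
        linarith
      have hd := diam (a + ((k : ℝ) + 1) * ε)
      have habs1 : |a - (a + ((k : ℝ) + 1) * ε)| = ((k : ℝ) + 1) * ε := by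
        have e : a - (a + ((k : ℝ) + 1) * ε) = -(((k : ℝ) + 1) * ε) := by ring
        rw [e, abs_neg, abs_of_nonneg (by positivity)]
      rw [habs1] at hd
      obtain ⟨cal1, _⟩ := cal (a + ((k : ℝ) + 1) * ε)
      have hspos : (0 : ℝ) < a + ((k : ℝ) + 1) * ε := by positivity
      rw [abs_of_pos hspos] at cal1
      rcases abs_cases (w (a + ((k : ℝ) + 1) * ε) - a) with ⟨h1, _⟩ | ⟨h1, _⟩
      · -- HIGH branch: contradiction with the coarse continuity bound
        linarith
      · -- LOW branch
        rcases abs_cases (w (a + ((k : ℝ) + 1) * ε)) with ⟨h2, _⟩ | ⟨h2, _⟩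
        · linarith
        · linarith
  -- the endgame: compare the last forced witness with the pin
  obtain ⟨q, hq1, hq2⟩ := hpin
  have hkeyN := key N le_rfl
  have hqi := qi (a + (N : ℝ) * ε) p q hq2
  have hsp : a + (N : ℝ) * ε ≤ p := by
    have hε1 : ε ≤ 1 / 8 := by rw [hεdef]; linarith
    linarith
  have habs2 : |(a + (N : ℝ) * ε) - p| = p - (a + (N : ℝ) * ε) := by
    rw [abs_sub_comm, abs_of_nonneg (by linarith)]
  rw [habs2] at hqi
  have h5 := le_abs_self (q - w (a + (N : ℝ) * ε))
  rw [abs_sub_comm (w (a + (N : ℝ) * ε)) q] at hqi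
  linarith

/-- Let `X` be a metric space and let `γ, γ̄ : ℝ → X` be lines
(isometric embeddings of `ℝ`) such that the Hausdorff distance between their images
is at most `C` and `d(γ 0, γ̄ 0) ≤ C`. Then for every `t`,
`min (d(γ t, γ̄ t)) (d(γ t, γ̄ (-t))) ≤ 3C`; consequently, after possibly replacing
`γ̄` by the reversed line `t ↦ γ̄ (-t)`, one has `d(γ t, γ̄ t) ≤ 3C` for all `t`. -/
theorem dist_le_three_mul_of_hausdorff_close_lines
    {X : Type} [MetricSpace X] (γ γ' : ℝ → X) (C : ℝ)
    (hγ : IsLine γ) (hγ' : IsLine γ')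
    (hH : EMetric.hausdorffEdist (Set.range γ) (Set.range γ') ≤ ENNReal.ofReal C)
    (h0 : dist (γ 0) (γ' 0) ≤ C) :
    (∀ t : ℝ, min (dist (γ t) (γ' t)) (dist (γ t) (γ' (-t))) ≤ 3 * C) ∧
    ((∀ t : ℝ, dist (γ t) (γ' t) ≤ 3 * C) ∨
      (∀ t : ℝ, dist (γ t) (γ' (-t)) ≤ 3 * C)) := by
  have hC : 0 ≤ C := le_trans dist_nonneg h0
  have hwit0 := exists_witness_of_hausdorff hC hH
  constructor
  · -- Part 1: the pointwise minimum bound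
    intro t
    refine le_of_forall_pos_le_add ?_
    intro ε hε
    obtain ⟨w, hw⟩ := hwit0 t (ε / 2) (by positivity)
    have h1 : dist (γ t) (γ' t) ≤ (C + ε / 2) + |w - t| := by
      have h4 := dist_triangle (γ t) (γ' w) (γ' t)
      rw [hγ' w t] at h4
      linarith
    have h2 : dist (γ t) (γ' (-t)) ≤ (C + ε / 2) + |w + t| := by
      have h4 := dist_triangle (γ t) (γ' w) (γ' (-t))
      rw [hγ' w (-t), sub_neg_eq_add] at h4
      linarith
    have cal1 : |t| ≤ |w| + (2 * C + ε / 2) := by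
      have h4 := dist_triangle4 (γ t) (γ' w) (γ' 0) (γ 0)
      rw [hγ t 0, hγ' w 0, sub_zero, sub_zero] at h4
      have h6 : dist (γ' 0) (γ 0) = dist (γ 0) (γ' 0) := dist_comm _ _
      linarith
    have cal2 : |w| ≤ |t| + (2 * C + ε / 2) := by
      have h4 := dist_triangle4 (γ' w) (γ t) (γ 0) (γ' 0)
      rw [hγ' w 0, hγ t 0, sub_zero, sub_zero] at h4
      have h5 : dist (γ' w) (γ t) = dist (γ t) (γ' w) := dist_comm _ _
      linarith
    rcases abs_cases w with ⟨e1, _⟩ | ⟨e1, _⟩ <;> rcases abs_cases t with ⟨e2, _⟩ | ⟨e2, _⟩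
    · -- w ≥ 0, t ≥ 0 : use the direct distance
      have h3 : |w - t| ≤ 2 * C + ε / 2 := abs_le.mpr ⟨by linarith, by linarith⟩
      exact le_trans (min_le_left _ _) (by linarith)
    · -- w ≥ 0, t < 0 : use the reversed distance
      have h3 : |w + t| ≤ 2 * C + ε / 2 := abs_le.mpr ⟨by linarith, by linarith⟩
      exact le_trans (min_le_right _ _) (by linarith)
    · -- w < 0, t ≥ 0 : use the reversed distance
      have h3 : |w + t| ≤ 2 * C + ε / 2 := abs_le.mpr ⟨by linarith, by linarith⟩
      exact le_trans (min_le_right _ _) (by linarith)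
    · -- w < 0, t < 0 : use the direct distance
      have h3 : |w - t| ≤ 2 * C + ε / 2 := abs_le.mpr ⟨by linarith, by linarith⟩
      exact le_trans (min_le_left _ _) (by linarith)

  · -- Part 2: the dichotomy
    by_contra hcon
    push_neg at hcon
    obtain ⟨⟨a, hA⟩, ⟨b, hB⟩⟩ := hcon
    set m : ℝ := min 1 (min (dist (γ a) (γ' a) - 3 * C) (dist (γ b) (γ' (-b)) - 3 * C))
      with hmdef
    have hm : 0 < m := by
      apply lt_min one_pos
      apply lt_min <;> linarith
    have hm1 : m ≤ 1 := min_le_left _ _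
    have hma : 3 * C + m ≤ dist (γ a) (γ' a) := by
      have h1 : m ≤ dist (γ a) (γ' a) - 3 * C :=
        le_trans (min_le_right 1 _) (min_le_left _ _)
      linarith
    have hmb : 3 * C + m ≤ dist (γ b) (γ' (-b)) := by
      have h1 : m ≤ dist (γ b) (γ' (-b)) - 3 * C :=
        le_trans (min_le_right 1 _) (min_le_right _ _)
      linarith
    have hε : (0 : ℝ) < m / 8 := by positivity
    have hε1 : m / 8 ≤ 1 / 8 := by linarith
    have habsa : 0 ≤ |a| := abs_nonneg a
    have habsb : 0 ≤ |b| := abs_nonneg b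
    set p : ℝ := |a| + |b| + 4 * C + 3 with hpdef
    have hppos : 0 < p := by positivity
    -- witnesses at the two far ends ±p
    obtain ⟨wp, hwp⟩ := hwit0 p (m / 8) hε
    obtain ⟨wn, hwn⟩ := hwit0 (-p) (m / 8) hε
    -- calibration of the two far witnesses
    have calp : p ≤ |wp| + (2 * C + m / 8) ∧ |wp| ≤ p + (2 * C + m / 8) := by
      constructor
      · have h4 := dist_triangle4 (γ p) (γ' wp) (γ' 0) (γ 0)
        rw [hγ p 0, hγ' wp 0, sub_zero, sub_zero, abs_of_pos hppos] at h4
        have h6 : dist (γ' 0) (γ 0) = dist (γ 0) (γ' 0) := dist_comm _ _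
        linarith
      · have h4 := dist_triangle4 (γ' wp) (γ p) (γ 0) (γ' 0)
        rw [hγ' wp 0, hγ p 0, sub_zero, sub_zero, abs_of_pos hppos] at h4
        have h5 : dist (γ' wp) (γ p) = dist (γ p) (γ' wp) := dist_comm _ _
        linarith
    have caln : p ≤ |wn| + (2 * C + m / 8) ∧ |wn| ≤ p + (2 * C + m / 8) := by
      have habsp : |(-p : ℝ)| = p := by rw [abs_neg, abs_of_pos hppos]
      constructor
      · have h4 := dist_triangle4 (γ (-p)) (γ' wn) (γ' 0) (γ 0)
        rw [hγ (-p) 0, hγ' wn 0, sub_zero, sub_zero, habsp] at h4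
        have h6 : dist (γ' 0) (γ 0) = dist (γ 0) (γ' 0) := dist_comm _ _
        linarith
      · have h4 := dist_triangle4 (γ' wn) (γ (-p)) (γ 0) (γ' 0)
        rw [hγ' wn 0, hγ (-p) 0, sub_zero, sub_zero, habsp] at h4
        have h5 : dist (γ' wn) (γ (-p)) = dist (γ (-p)) (γ' wn) := dist_comm _ _
        linarith
    -- the two far witnesses have opposite signs
    have hsep : 2 * p ≤ (C + m / 8) + |wp - wn| + (C + m / 8) := by
      have h4 := dist_triangle4 (γ p) (γ' wp) (γ' wn) (γ (-p))
      rw [hγ p (-p), hγ' wp wn] at h4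
      have e1 : |p - -p| = 2 * p := by
        rw [sub_neg_eq_add]
        rw [show p + p = 2 * p by ring, abs_of_pos (by linarith)]
      rw [e1] at h4
      have h5 : dist (γ' wn) (γ (-p)) = dist (γ (-p)) (γ' wn) := dist_comm _ _
      linarith
    have hnotboth : ¬ (0 ≤ wp ∧ 0 ≤ wn) := by
      rintro ⟨h1, h2⟩
      rw [abs_of_nonneg h1] at calp
      rw [abs_of_nonneg h2] at caln
      have h3 : |wp - wn| ≤ 4 * C + 2 * (m / 8) :=
        abs_le.mpr ⟨by linarith [calp.1, calp.2, caln.1, caln.2],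
          by linarith [calp.1, calp.2, caln.1, caln.2]⟩
      have hplb : 4 * C + 3 ≤ p := by rw [hpdef]; linarith
      linarith
    have hnotboth' : ¬ (wp ≤ 0 ∧ wn ≤ 0) := by
      rintro ⟨h1, h2⟩
      rw [abs_of_nonpos h1] at calp
      rw [abs_of_nonpos h2] at caln
      have h3 : |wp - wn| ≤ 4 * C + 2 * (m / 8) :=
        abs_le.mpr ⟨by linarith [calp.1, calp.2, caln.1, caln.2],
          by linarith [calp.1, calp.2, caln.1, caln.2]⟩
      have hplb : 4 * C + 3 ≤ p := by rw [hpdef]; linarith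
      linarith
    rcases le_or_gt 0 wp with hwpsgn | hwpsgn
    · -- ALIGNED case: wp ≥ p - 2C - m/8 and wn ≤ -(p - 2C - m/8)
      have hwplb : p - (2 * C + m / 8) ≤ wp := by
        rw [abs_of_nonneg hwpsgn] at calp; linarith [calp.1]
      have hwnneg : wn ≤ 0 := by
        by_contra h
        exact hnotboth ⟨hwpsgn, le_of_lt (lt_of_not_ge h)⟩
      have hwnub : wn ≤ -(p - (2 * C + m / 8)) := by
        rw [abs_of_nonpos hwnneg] at caln; linarith [caln.1]
      -- kill the violation of the direct distance at a
      rcases lt_trichotomy a 0 with hasgn | hasgn | hasgn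
      · -- a < 0 : flip both lines
        refine master_forcing (fun t => γ (-t)) (fun t => γ' (-t)) C m (-a) p
          ?_ ?_ ?_ hm hm1 ?_ ?_ (by linarith) ?_ ?_
        · intro s t
          simp only []
          rw [hγ (-s) (-t)]
          rw [show -s - -t = -(s - t) by ring, abs_neg]
        · intro s t
          simp only []
          rw [hγ' (-s) (-t)]
          rw [show -s - -t = -(s - t) by ring, abs_neg]
        · simp only [neg_zero]; exact h0
        · intro s
          obtain ⟨w', hw'⟩ := hwit0 (-s) (m / 8) hε
          exact ⟨-w', by simpa only [neg_neg] using hw'⟩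
        · simp only [neg_neg]; exact hma
        · have : |a| = -a := abs_of_neg hasgn
          rw [hpdef]; linarith
        · refine ⟨-wn, by linarith, ?_⟩
          simpa only [neg_neg] using hwn
      · -- a = 0 : direct contradiction with the calibration
        rw [hasgn] at hma
        linarith
      · -- a > 0 : apply the forcing lemma directly
        refine master_forcing γ γ' C m a p hγ hγ' h0 hm hm1
          (fun s => hwit0 s (m / 8) hε) hma hasgn ?_ ⟨wp, hwplb, hwp⟩
        have : a ≤ |a| := le_abs_self a
        rw [hpdef]; linarith
    · -- REVERSED case: wp ≤ -(p - 2C - m/8) and wn ≥ p - 2C - m/8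
      have hwpub : wp ≤ -(p - (2 * C + m / 8)) := by
        rw [abs_of_nonpos (le_of_lt hwpsgn)] at calp; linarith [calp.1]
      have hwnpos : 0 ≤ wn := by
        by_contra h
        exact hnotboth' ⟨le_of_lt hwpsgn, le_of_lt (lt_of_not_ge h)⟩
      have hwnlb : p - (2 * C + m / 8) ≤ wn := by
        rw [abs_of_nonneg hwnpos] at caln; linarith [caln.1]
      -- kill the violation of the reversed distance at b
      rcases lt_trichotomy b 0 with hbsgn | hbsgn | hbsgn
      · -- b < 0 : flip the first line only
        refine master_forcing (fun t => γ (-t)) γ' C m (-b) p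
          ?_ hγ' ?_ hm hm1 ?_ ?_ (by linarith) ?_ ?_
        · intro s t
          simp only []
          rw [hγ (-s) (-t)]
          rw [show -s - -t = -(s - t) by ring, abs_neg]
        · simp only [neg_zero]; exact h0
        · intro s
          exact hwit0 (-s) (m / 8) hε
        · simp only [neg_neg]; exact hmb
        · have : b ≤ |b| := le_abs_self b
          have hb' : -b ≤ |b| := neg_le_abs b
          rw [hpdef]; linarith
        · exact ⟨wn, by linarith, hwn⟩
      · -- b = 0 : direct contradiction
        rw [hbsgn, neg_zero] at hmb
        linarith
      · -- b > 0 : reverse the second line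
        refine master_forcing γ (fun t => γ' (-t)) C m b p hγ ?_ ?_ hm hm1 ?_ ?_ hbsgn ?_ ?_
        · intro s t
          simp only []
          rw [hγ' (-s) (-t)]
          rw [show -s - -t = -(s - t) by ring, abs_neg]
        · simp only [neg_zero]; exact h0
        · intro s
          obtain ⟨w', hw'⟩ := hwit0 s (m / 8) hε
          exact ⟨-w', by simpa only [neg_neg] using hw'⟩
        · exact hmb
        · have : b ≤ |b| := le_abs_self b
          rw [hpdef]; linarith
        · refine ⟨-wp, by linarith, ?_⟩
          simpa only [neg_neg] using hwp
end

section
/- Let M be a Riemannian surface without conjugate points admitting total curvature, homeomorphic to the closed upper half-plane, with totally geodesic boundary, and fix a base point O ∈ ∂M; parametrize the rays emanating from O by their initial angle θ ∈ [0, π], where γ₀ and γ_π are the two boundary rays. Then the set I₀ = { θ ∈ [0, π] : d_∞(γ₀, γ_θ) < ∞ } is an interval containing 0: if θ ∈ I₀ and 0 ≤ θ' ≤ θ, then θ' ∈ I₀. -/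
open Set Filter MeasureTheory Metric
open scoped ENNReal NNReal Topology

/-- Abstract packaging of a complete Riemannian surface: the underlying metric
space of the Riemannian metric, together with its geodesics, its Gaussian
curvature, its Riemannian area measure, the Riemannian angle, and the
(differential-geometric, hence here abstractly recorded) property of having
no conjugate points. -/
structure RiemannianSurface where
  /-- the underlying set of points -/
  M : Type
  /-- the distance function induced by the Riemannian metric -/
  [metric : MetricSpace M]
  [mble : MeasurableSpace M]
  borel : BorelSpace M
  /-- the Riemannian metric is complete -/
  complete : CompleteSpace M
  /-- the complete unit-speed geodesics of the Riemannian metric -/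
  IsGeodesic : (ℝ → M) → Prop
  /-- the unit-speed geodesic segments `σ : [a, b] → M` of the Riemannian metric -/
  IsGeodesicSegment : (ℝ → M) → ℝ → ℝ → Prop
  /-- a metric line is a (complete, globally minimizing) geodesic -/
  line_isGeodesic : ∀ γ : ℝ → M, IsLine γ → IsGeodesic γ
  /-- the restriction of a complete geodesic to an interval is a geodesic segment -/
  geodesic_isGeodesicSegment : ∀ (γ : ℝ → M) (a b : ℝ), IsGeodesic γ → IsGeodesicSegment γ a b
  /-- a minimizing segment is a geodesic segment -/
  minimizing_isGeodesicSegment : ∀ (σ : ℝ → M) (a b : ℝ),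
    IsMinimizingSegment σ a b → IsGeodesicSegment σ a b
  /-- the Gaussian curvature -/
  K : M → ℝ
  /-- the Riemannian area measure -/
  area : MeasureTheory.Measure M
  /-- `angle p x y` is the angle `∠ₚ(x, y)` at `p` subtended by `x` and `y`
  (the angle at `p` between the initial directions of minimizing geodesics
  from `p` to `x` and to `y`) -/
  angle : M → M → M → ℝ
  /-- the Riemannian metric has no conjugate points: no geodesic contains a pair
  of mutually conjugate points -/
  NoConjugatePoints : Prop

attribute [instance] RiemannianSurface.metric RiemannianSurface.mble

namespace RiemannianSurface

variable (S : RiemannianSurface)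

/-- the total positive curvature `c₊(M) = ∫_M K⁺ dμ`, as an extended nonnegative real -/
noncomputable def cPlus : ℝ≥0∞ := ∫⁻ x, ENNReal.ofReal (S.K x) ∂S.area

/-- `∫_M (-K⁻) dμ = -c₋(M)`, the absolute value of the total negative curvature,
as an extended nonnegative real -/
noncomputable def cMinus : ℝ≥0∞ := ∫⁻ x, ENNReal.ofReal (-S.K x) ∂S.area

/-- `M` admits total curvature if at least one of `c₊(M)`, `c₋(M)` is finite -/
def AdmitsTotalCurvature : Prop := S.cPlus ≠ ⊤ ∨ S.cMinus ≠ ⊤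

/-- the total curvature `c(M) = c₊(M) + c₋(M) = ∫_M K dμ`, as an extended real -/
noncomputable def totalCurvature : EReal := (S.cPlus : EReal) - (S.cMinus : EReal)

/-- the total curvature `c(A) = ∫_A K dμ` of a region `A ⊆ M`, as an extended real -/
noncomputable def cOn (A : Set S.M) : EReal :=
  ((∫⁻ x in A, ENNReal.ofReal (S.K x) ∂S.area : ℝ≥0∞) : EReal) -
    ((∫⁻ x in A, ENNReal.ofReal (-S.K x) ∂S.area : ℝ≥0∞) : EReal)

/-- `M` satisfies the visibility axiom at `p`: for every `ε > 0` there is `R > 0`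
such that every geodesic segment staying at distance `> R` from `p` subtends an
angle at most `ε` at `p`. -/
def VisibilityAt (p : S.M) : Prop :=
  ∀ ε : ℝ, 0 < ε → ∃ R : ℝ, 0 < R ∧
    ∀ (σ : ℝ → S.M) (a b : ℝ), a ≤ b → S.IsGeodesicSegment σ a b →
      (∀ t ∈ Set.Icc a b, R < dist p (σ t)) → S.angle p (σ a) (σ b) ≤ ε

end RiemannianSurface

/-- A Riemannian surface homeomorphic to the closed upper half-plane, with totally
geodesic boundary, together with a base point `O` on the boundary and the family of
rays emanating from `O`, parametrized by their initial angle `θ ∈ [0, π]`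
(the rays `γ₀` and `γ_π` being the two boundary rays). -/
structure HalfPlaneSurface where
  S : RiemannianSurface
  /-- the surface is homeomorphic to the closed upper half-plane -/
  halfPlane : Nonempty (S.M ≃ₜ (ℝ × {y : ℝ // 0 ≤ y}))
  /-- the base point on the boundary -/
  O : S.M
  /-- `ray θ` is the ray emanating from `O` with initial angle `θ`, for `θ ∈ [0, π]` -/
  ray : ℝ → ℝ → S.M
  ray_isRay : ∀ θ ∈ Set.Icc (0 : ℝ) Real.pi, IsRay (ray θ)
  ray_base : ∀ θ ∈ Set.Icc (0 : ℝ) Real.pi, ray θ 0 = O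
  /-- `θ` is the initial angle of `ray θ`: the angle at `O` subtended by points on
  `ray θ` and on `ray θ'` is `|θ - θ'|` -/
  ray_angle : ∀ θ ∈ Set.Icc (0 : ℝ) Real.pi, ∀ θ' ∈ Set.Icc (0 : ℝ) Real.pi,
    ∀ t t' : ℝ, 0 < t → 0 < t' → S.angle O (ray θ t) (ray θ' t') = |θ - θ'|
  /-- every point of the surface lies on one of the rays from `O` -/
  fills : ∀ x : S.M, ∃ θ ∈ Set.Icc (0 : ℝ) Real.pi, ∃ t : ℝ, 0 ≤ t ∧ ray θ t = x
  /-- the boundary (the union of the rays of angles `0` and `π`) is totally geodesic: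
  it is the image of a complete geodesic line -/
  boundary_geodesic : ∃ γ : ℝ → S.M, IsLine γ ∧
    Set.range γ = ray Real.pi '' Set.Ici 0 ∪ ray 0 '' Set.Ici 0

namespace HalfPlaneSurface

/-- the (unique) closed sector `T_{α,β}` bounded by the rays of angles `α ≤ β`:
the union of the rays of angles `θ ∈ [α, β]` -/
def sector (H : HalfPlaneSurface) (α β : ℝ) : Set H.S.M :=
  ⋃ θ ∈ Set.Icc α β, H.ray θ '' Set.Ici (0 : ℝ)

/-- `λ∞(T_{α,β}) = (β - α) - c(T_{α,β})`: the interior angle at `O` of the sector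
minus its total curvature, for `α ≤ β` -/
noncomputable def lambdaInf (H : HalfPlaneSurface) (α β : ℝ) : EReal :=
  ((β - α : ℝ) : EReal) - H.S.cOn (H.sector α β)

/-- `d∞(γ_α, γ_β) = λ∞(T_{α,β})`, for `α ≤ β` -/
noncomputable def dInf (H : HalfPlaneSurface) (α β : ℝ) : EReal := H.lambdaInf α β

end HalfPlaneSurface

/-- Let `M` be a Riemannian surface without conjugate points
admitting total curvature, homeomorphic to the closed upper half-plane, with totally
geodesic boundary, base point `O ∈ ∂M`, and rays from `O` parametrized by initial
angle `θ ∈ [0, π]` (with `γ₀`, `γ_π` the boundary rays). Then the set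
`I₀ = {θ ∈ [0, π] : d∞(γ₀, γ_θ) < ∞}` is an interval containing `0`: if `θ ∈ I₀` and
`0 ≤ θ' ≤ θ`, then `θ' ∈ I₀`. -/
theorem dInf_finite_is_interval
    (H : HalfPlaneSurface)
    (hncp : H.S.NoConjugatePoints)
    (htc : H.S.AdmitsTotalCurvature)
    (θ : ℝ) (hθ : θ ∈ Set.Icc (0 : ℝ) Real.pi)
    (hfin : H.dInf 0 θ ≠ ⊤)
    (θ' : ℝ) (h0' : 0 ≤ θ') (hle : θ' ≤ θ) :
    H.dInf 0 θ' ≠ ⊤ := by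
  have key : ∀ β : ℝ, H.dInf 0 β = ⊤ ↔
      (∫⁻ x in H.sector 0 β, ENNReal.ofReal (-H.S.K x) ∂H.S.area) = ⊤ := by
    intro β
    set a := (∫⁻ x in H.sector 0 β, ENNReal.ofReal (H.S.K x) ∂H.S.area) with ha
    set b := (∫⁻ x in H.sector 0 β, ENNReal.ofReal (-H.S.K x) ∂H.S.area) with hb
    have hdef : H.dInf 0 β = ((β - 0 : ℝ) : EReal) - ((a : EReal) - (b : EReal)) := rfl
    constructor
    · intro h
      by_contra hbt
      have hcne : ((a : EReal) - (b : EReal)) ≠ ⊥ := by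
        rw [sub_eq_add_neg, Ne, EReal.add_eq_bot_iff]
        push_neg
        refine ⟨EReal.coe_ennreal_ne_bot a, ?_⟩
        rw [Ne, EReal.neg_eq_bot_iff]
        simpa [EReal.coe_ennreal_eq_top_iff] using hbt
      have : H.dInf 0 β < ⊤ := by
        rw [hdef, sub_eq_add_neg]
        exact EReal.add_lt_top (EReal.coe_ne_top _)
          (by rw [Ne, EReal.neg_eq_top_iff]; exact hcne)
      exact absurd h this.ne
    · intro hbt
      rw [hdef, hbt]
      simp [sub_eq_add_neg, EReal.add_bot]
  intro htop
  apply hfin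
  rw [key] at htop ⊢
  have hsub : H.sector 0 θ' ⊆ H.sector 0 θ :=
    Set.biUnion_subset_biUnion_left (Set.Icc_subset_Icc_right hle)
  exact top_le_iff.mp (htop ▸ MeasureTheory.lintegral_mono_set hsub)
end
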